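/- Let n ≥ 2 and m ≥ 2 be integers, let f ∈ R_m = ℤ[x_1, ..., x_m], and let 1 ≤ i < j ≤ m. Then the coefficient of x_i x_j in f^{2^n} is given exactly by c_{f^{2^n}}(x_i x_j) = 2^n · c_f(1)^{2^n − 1} · c_f(x_i x_j) + 2^n (2^n − 1) · c_f(1)^{2^n − 2} · c_f(x_i) · c_f(x_j). -/

import Mathlib

open MvPolynomial Finsupp

lemma coeff_zero_pderiv {m : ℕ} (i : Fin m) (f : MvPolynomial (Fin m) ℤ) :
    MvPolynomial.coeff 0 (MvPolynomial.pderiv i f) =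
      MvPolynomial.coeff (Finsupp.single i 1) f := by
  induction f using MvPolynomial.induction_on' with
  | monomial s a =>
    rw [pderiv_monomial, coeff_monomial, coeff_monomial]
    by_cases h : s = Finsupp.single i 1
    · subst h; simp
    · rw [if_neg h]
      by_cases h0 : s - Finsupp.single i 1 = 0
      · rw [if_pos h0]
        have hi : s i = 0 := by
          by_contra hsi
          apply h
          ext k
          have hk := DFunLike.congr_fun h0 k
          simp only [Finsupp.tsub_apply, Finsupp.coe_zero, Pi.zero_apply] at hk
          by_cases hki : k = i
          · subst hki
            simp only [Finsupp.single_eq_same] at hk ⊢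
            omega
          · simp only [Finsupp.single_eq_of_ne' (Ne.symm hki)] at hk ⊢
            omega
        simp [hi]
      · rw [if_neg h0]
  | add p q hp hq => simp [hp, hq]

lemma coeff_single_pderiv {m : ℕ} (i j : Fin m) (hij : i ≠ j)
    (f : MvPolynomial (Fin m) ℤ) :
    MvPolynomial.coeff (Finsupp.single j 1) (MvPolynomial.pderiv i f) =
      MvPolynomial.coeff (Finsupp.single i 1 + Finsupp.single j 1) f := by
  induction f using MvPolynomial.induction_on' with
  | monomial s a =>
    rw [pderiv_monomial, coeff_monomial, coeff_monomial]
    by_cases h : s = Finsupp.single i 1 + Finsupp.single j 1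
    · subst h
      rw [if_pos (by rw [add_tsub_cancel_left])]
      simp [Finsupp.single_eq_of_ne' hij.symm]
    · rw [if_neg h]
      by_cases h0 : s - Finsupp.single i 1 = Finsupp.single j 1
      · rw [if_pos h0]
        have hi : s i = 0 := by
          by_contra hsi
          apply h
          ext k
          have hk := DFunLike.congr_fun h0 k
          simp only [Finsupp.tsub_apply] at hk
          by_cases hki : k = i
          · subst hki
            simp only [Finsupp.single_eq_same, Finsupp.coe_add, Pi.add_apply,
              Finsupp.single_eq_of_ne' hij.symm] at hk ⊢
            omega
          · by_cases hkj : k = j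
            · subst hkj
              simp only [Finsupp.single_eq_same, Finsupp.coe_add, Pi.add_apply,
                Finsupp.single_eq_of_ne' hij, Finsupp.single_eq_of_ne' (Ne.symm hki)] at hk ⊢
              omega
            · simp only [Finsupp.single_eq_of_ne' (Ne.symm hki),
                Finsupp.single_eq_of_ne' (Ne.symm hkj), Finsupp.coe_add, Pi.add_apply] at hk ⊢
              omega
        simp [hi]
      · rw [if_neg h0]
  | add p q hp hq => simp [hp, hq]

theorem stmt_5 (n m : ℕ) (hn : 2 ≤ n) (hm : 2 ≤ m)
    (f : MvPolynomial (Fin m) ℤ) (i j : Fin m) (hij : i < j) :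
    MvPolynomial.coeff (Finsupp.single i 1 + Finsupp.single j 1) (f ^ 2 ^ n) =
      2 ^ n * MvPolynomial.coeff 0 f ^ (2 ^ n - 1) *
          MvPolynomial.coeff (Finsupp.single i 1 + Finsupp.single j 1) f +
        2 ^ n * (2 ^ n - 1) * MvPolynomial.coeff 0 f ^ (2 ^ n - 2) *
          MvPolynomial.coeff (Finsupp.single i 1) f *
          MvPolynomial.coeff (Finsupp.single j 1) f := by
  have hij' : i ≠ j := ne_of_lt hij
  set N := 2 ^ n with hN
  have hN2 : 2 ≤ N := by
    calc 2 = 2 ^ 1 := by norm_num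
    _ ≤ 2 ^ n := Nat.pow_le_pow_right (by norm_num) (by omega)
  have key : MvPolynomial.coeff (Finsupp.single i 1 + Finsupp.single j 1) (f ^ N) =
      MvPolynomial.coeff 0 (MvPolynomial.pderiv j (MvPolynomial.pderiv i (f ^ N))) := by
    rw [coeff_zero_pderiv, coeff_single_pderiv i j hij']
  have hmul : ∀ p q : MvPolynomial (Fin m) ℤ,
      MvPolynomial.coeff 0 (p * q) = MvPolynomial.coeff 0 p * MvPolynomial.coeff 0 q := by
    intro p q
    rw [← MvPolynomial.constantCoeff_eq, map_mul]
  have hpow : ∀ (p : MvPolynomial (Fin m) ℤ) (k : ℕ),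
      MvPolynomial.coeff 0 (p ^ k) = MvPolynomial.coeff 0 p ^ k := by
    intro p k
    rw [← MvPolynomial.constantCoeff_eq, map_pow]
  rw [key]
  rw [Derivation.leibniz_pow, map_nsmul, smul_eq_mul, Derivation.leibniz,
    Derivation.leibniz_pow, smul_eq_mul, smul_eq_mul, smul_eq_mul]
  rw [MvPolynomial.coeff_smul, MvPolynomial.coeff_add,
    hmul, hmul, MvPolynomial.coeff_smul, hmul, hpow, hpow,
    coeff_zero_pderiv, coeff_zero_pderiv, coeff_zero_pderiv j,
    coeff_single_pderiv i j hij']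
  simp only [smul_eq_mul, nsmul_eq_mul]
  have h1 : N - 1 - 1 = N - 2 := by omega
  rw [h1, Nat.cast_sub (by omega : 1 ≤ N), hN]
  push_cast
  ring
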